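/- Let H be an ℵ₁-free abelian group of cardinality ℵ₁ and let B be a basis of H (so in particular H is free). Then the set D = {p ∈ P_pb : p ⊄ B} is dense in the poset (P_pb, ≤): for every q ∈ P_pb there exists p ∈ P_pb with q ⊆ p and p not a subset of B. -/

import Mathlib

/-- An abelian group is ℵ₁-free if every countable subgroup is free (as a ℤ-module). -/
def Aleph1Free (H : Type*) [AddCommGroup H] : Prop :=
  ∀ K : AddSubgroup H, Countable K → Module.Free ℤ K

/-- The first uncountable ordinal ω₁. -/
noncomputable def omega1 : Ordinal := (Cardinal.aleph 1).ord

/-- `C` is a club in `o`: a subset of `o` closed under suprema of its bounded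
nonempty subsets and unbounded in `o`. -/
def IsClubIn (C : Set Ordinal) (o : Ordinal) : Prop :=
  (∀ α ∈ C, α < o) ∧
  (∀ S : Set Ordinal, S ⊆ C → S.Nonempty → (∃ β < o, ∀ x ∈ S, x ≤ β) → sSup S ∈ C) ∧
  (∀ α < o, ∃ β ∈ C, α < β)

/-- `F` (restricted to ordinals `< ω₁`) is an ℵ₁-filtration of `H`. -/
def IsAleph1Filtration {H : Type*} [AddCommGroup H] (F : Ordinal → AddSubgroup H) : Prop :=
  (∀ α < omega1, Countable (F α)) ∧
  (∀ α β : Ordinal, α ≤ β → β < omega1 → F α ≤ F β) ∧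
  (∀ α < omega1, Order.IsSuccLimit α → ∀ x : H, x ∈ F α ↔ ∃ β < α, x ∈ F β) ∧
  (∀ x : H, ∃ α < omega1, x ∈ F α)

/-- The forcing poset of partial bases. -/
def Ppb (H : Type*) [AddCommGroup H] : Set (Set H) :=
  {p | LinearIndependent ℤ ((↑) : p → H) ∧ p.Countable ∧
    Aleph1Free (H ⧸ AddSubgroup.closure p)}
lemma aleph1Free_of_injective {G H : Type*} [AddCommGroup G] [AddCommGroup H]
    (f : G →+ H) (hf : Function.Injective f) (hH : Aleph1Free H) : Aleph1Free G := by
  intro K hK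
  have hcnt : Countable (K.map f) := by
    have e := K.equivMapOfInjective f hf
    exact Countable.of_equiv K e.toEquiv
  have := hH (K.map f) hcnt
  exact Module.Free.of_equiv (K.equivMapOfInjective f hf).symm.toIntLinearEquiv

lemma quot_aleph1Free {H ι : Type*} [AddCommGroup H] (hH : Aleph1Free H)
    (c : Module.Basis ι ℤ H) (S : Set ι) :
    Aleph1Free (H ⧸ AddSubgroup.closure (c '' S)) := by
  set N : Submodule ℤ H := Submodule.span ℤ (c '' S) with hN
  set N' : Submodule ℤ H := Submodule.span ℤ (c '' Sᶜ) with hN'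
  have hcompl : IsCompl N N' := by
    constructor
    · exact c.linearIndependent.disjoint_span_image disjoint_compl_right
    · rw [codisjoint_iff, hN, hN', ← Submodule.span_union, ← Set.image_union,
        Set.union_compl_self, Set.image_univ, c.span_eq]
  have hA1 : Aleph1Free (H ⧸ N) := by
    refine aleph1Free_of_injective
      ((N'.subtype.toAddMonoidHom).comp
        (Submodule.quotientEquivOfIsCompl N N' hcompl).toLinearMap.toAddMonoidHom)
      ?_ hH
    exact N'.injective_subtype.comp (Submodule.quotientEquivOfIsCompl N N' hcompl).injective
  have hker : AddSubgroup.closure (c '' S) ≤ N.mkQ.toAddMonoidHom.ker := by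
    rw [← Submodule.span_int_eq_addSubgroupClosure]
    intro x hx
    simpa [AddMonoidHom.mem_ker, Submodule.Quotient.mk_eq_zero] using hx
  set φ : (H ⧸ AddSubgroup.closure (c '' S)) →+ (H ⧸ N) :=
    QuotientAddGroup.lift _ N.mkQ.toAddMonoidHom hker with hφ
  refine aleph1Free_of_injective φ ?_ hA1
  rw [injective_iff_map_eq_zero]
  intro a
  induction a using QuotientAddGroup.induction_on with
  | H x =>
    intro hx
    rw [hφ, QuotientAddGroup.lift_mk] at hx
    have hxN : x ∈ N := by
      simpa [Submodule.Quotient.mk_eq_zero] using hx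
    rw [← Submodule.mem_toAddSubgroup, Submodule.span_int_eq_addSubgroupClosure] at hxN
    exact (QuotientAddGroup.eq_zero_iff x).2 hxN

/-- If `B` is a basis of `H`, then `D = {p ∈ P_pb : p ⊄ B}` is dense in
`(P_pb, ≤)`. -/
theorem D_notSubsetBasis_dense {H : Type*} [AddCommGroup H]
    (hH : Aleph1Free H) (hcard : Cardinal.mk H = Cardinal.aleph 1)
    (B : Set H) (hBindep : LinearIndependent ℤ ((↑) : B → H))
    (hBspan : AddSubgroup.closure B = ⊤) :
    ∀ q ∈ Ppb H, ∃ p ∈ Ppb H, q ⊆ p ∧ ¬ p ⊆ B := by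
  intro q hq
  classical
  by_cases hqB : q ⊆ B
  swap
  · exact ⟨q, hq, subset_rfl, hqB⟩
  -- span of B is everything
  have hsp : Submodule.span ℤ B = ⊤ := by
    apply AddSubgroup.toIntSubmodule.symm.injective
    simp only [AddSubgroup.toIntSubmodule_symm]
    rw [show (Submodule.span ℤ B).toAddSubgroup = AddSubgroup.closure B from
      Submodule.span_int_eq_addSubgroupClosure B, hBspan]
    rfl
  have hsp' : ⊤ ≤ Submodule.span ℤ (Set.range ((↑) : B → H)) := by
    rw [Subtype.range_coe, hsp]
  let b0 : Module.Basis B ℤ H := Module.Basis.mk hBindep hsp'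
  have hb0 : ∀ i : B, b0 i = ↑i := fun i => Module.Basis.mk_apply hBindep hsp' i
  -- B is uncountable
  have hBnc : ¬ B.Countable := by
    intro hBc
    have : Countable B := hBc.to_subtype
    have : Countable H := Countable.of_equiv _ b0.repr.toEquiv.symm
    have : Cardinal.mk H ≤ Cardinal.aleph0 := Cardinal.mk_le_aleph0
    rw [hcard] at this
    exact absurd this (not_le.2 Cardinal.aleph0_lt_aleph_one)
  -- two distinct elements of B \ q
  have hdnt : (B \ q).Nontrivial := by
    refine Set.Infinite.nontrivial ?_
    intro hfin
    exact hBnc (((hfin.countable).union hq.2.1).mono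
      (by intro x hx; by_cases h : x ∈ q; exact Set.mem_union_right _ h
          exact Set.mem_union_left _ ⟨hx, h⟩))
  obtain ⟨b, hb, b', hb', hbb'⟩ := hdnt
  set i₁ : B := ⟨b, hb.1⟩ with hi₁
  set i₀ : B := ⟨b', hb'.1⟩ with hi₀
  have hne' : i₁ ≠ i₀ := fun h => hbb' (congrArg Subtype.val h)
  set x : H := b + b' with hxdef
  -- the automorphism
  set f : H →ₗ[ℤ] H := b0.constr ℕ (fun i => if i = i₀ then b0 i₁ + b0 i₀ else b0 i) with hf
  set g : H →ₗ[ℤ] H := b0.constr ℕ (fun i => if i = i₀ then b0 i₀ - b0 i₁ else b0 i) with hg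
  have hfg : f.comp g = LinearMap.id := by
    apply b0.ext
    intro i
    by_cases h : i = i₀
    · simp [hf, hg, h, Module.Basis.constr_basis, hne']
    · simp [hf, hg, h, Module.Basis.constr_basis]
  have hgf : g.comp f = LinearMap.id := by
    apply b0.ext
    intro i
    by_cases h : i = i₀
    · simp [hf, hg, h, Module.Basis.constr_basis, hne']
    · simp [hf, hg, h, Module.Basis.constr_basis]
  set e : H ≃ₗ[ℤ] H := LinearEquiv.ofLinear f g hfg hgf with he
  set c : Module.Basis B ℤ H := b0.map e with hcdef
  have hc : ∀ i : B, c i = if i = i₀ then x else ↑i := by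
    intro i
    rw [hcdef, Module.Basis.map_apply, he, LinearEquiv.ofLinear_apply, hf, Module.Basis.constr_basis]
    by_cases h : i = i₀ <;> simp [h, hb0, hxdef, hi₁, hi₀]
  set p : Set H := insert x q with hp
  set S : Set B := {i | ↑i ∈ q ∨ i = i₀} with hS
  have hpS : p = c '' S := by
    ext y
    constructor
    · rintro (rfl | hy)
      · exact ⟨i₀, Or.inr rfl, by rw [hc]; simp⟩
      · refine ⟨⟨y, hqB hy⟩, Or.inl hy, ?_⟩
        rw [hc]
        have : (⟨y, hqB hy⟩ : B) ≠ i₀ := by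
          intro h
          have : y = b' := congrArg Subtype.val h
          exact hb'.2 (this ▸ hy)
        simp [this]
    · rintro ⟨i, hi, rfl⟩
      rcases hi with hi | rfl
      · have hii : i ≠ i₀ := by
          intro h; apply hb'.2; rwa [h] at hi
        rw [hc]; simp only [hii, if_neg, ite_false]
        exact Set.mem_insert_iff.2 (Or.inr hi)
      · rw [hc]; simp only [if_pos rfl]; exact Set.mem_insert x q
  -- x is not in B
  have hxB : x ∉ B := by
    intro hxB
    set j : B := ⟨x, hxB⟩ with hj
    have hbj : b0 j = b0 i₁ + b0 i₀ := by rw [hb0, hb0, hb0]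
    have h1 := congrArg b0.repr hbj
    rw [map_add, b0.repr_self, b0.repr_self, b0.repr_self] at h1
    have h2 : (Finsupp.single j (1 : ℤ)) i₁ = 1 := by
      rw [h1]
      simp [Finsupp.single_apply, Ne.symm hne']
    have h3 : (Finsupp.single j (1 : ℤ)) i₀ = 1 := by
      rw [h1]
      simp [Finsupp.single_apply, hne']
    have hj1 : j = i₁ := by
      by_contra hcon
      rw [Finsupp.single_apply, if_neg hcon] at h2
      exact one_ne_zero h2.symm
    have hj0 : j = i₀ := by
      by_contra hcon
      rw [Finsupp.single_apply, if_neg hcon] at h3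
      exact one_ne_zero h3.symm
    exact hne' (hj1.symm.trans hj0)
  refine ⟨p, ⟨?_, ?_, ?_⟩, fun y hy => Set.mem_insert_iff.2 (Or.inr hy), ?_⟩
  · rw [hpS]
    have h1 : LinearIndependent ℤ ((↑) : Set.range c → H) := (linearIndepOn_id_range_iff c.injective).2 c.linearIndependent
    exact LinearIndepOn.mono (R := ℤ) (v := id) h1 (Set.image_subset_range c S)
  · exact hq.2.1.insert x
  · rw [hpS]
    exact quot_aleph1Free hH c S
  · intro hpB
    exact hxB (hpB (Set.mem_insert x q))
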